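/- Let u = 2e - 1 and v = 2f - 1 be involutions in a unital ring R with 2 invertible, where e, f are idempotents with eR = fR. Then w := (u+v)/2 is an involution satisfying wvw = u, and w is the unique involution w' with {x : w'x = x} = eR satisfying w'vw' = u. -/

import Mathlib

theorem stmt10 {R : Type*} [Ring R] [Invertible (2:R)] (e f : R)
    (he : e * e = e) (hf : f * f = f)
    (hef : {x : R | ∃ r, x = e * r} = {x : R | ∃ r, x = f * r}) :
    (⅟(2:R) * ((2*e-1) + (2*f-1))) * (⅟(2:R) * ((2*e-1) + (2*f-1))) = 1 ∧
    {x : R | (⅟(2:R) * ((2*e-1) + (2*f-1))) * x = x} = {x : R | ∃ r, x = e * r} ∧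
    (⅟(2:R) * ((2*e-1) + (2*f-1))) * (2*f-1) * (⅟(2:R) * ((2*e-1) + (2*f-1))) = 2*e-1 ∧
    ∀ w' : R, w' * w' = 1 → {x : R | w' * x = x} = {x : R | ∃ r, x = e * r} →
      w' * (2*f-1) * w' = 2*e-1 → w' = ⅟(2:R) * ((2*e-1) + (2*f-1)) := by
  -- w = e + f - 1
  have hw : ⅟(2:R) * ((2*e-1) + (2*f-1)) = e + f - 1 := by
    rw [show (2*e-1) + (2*f-1) = 2*(e+f-1) by noncomm_ring, invOf_mul_cancel_left]
  -- e ∈ fR, hence f*e = e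
  have heR : e ∈ {x : R | ∃ r, x = f * r} := hef ▸ ⟨e, he.symm⟩
  have hfe : f * e = e := by
    obtain ⟨r, hr⟩ := heR
    rw [hr, ← mul_assoc, hf]
  -- f ∈ eR, hence e*f = f
  have hfR : f ∈ {x : R | ∃ r, x = e * r} := hef ▸ ⟨f, hf.symm⟩
  have hefm : e * f = f := by
    obtain ⟨r, hr⟩ := hfR
    rw [hr, ← mul_assoc, he]
  rw [hw]
  refine ⟨?_, ?_, ?_, ?_⟩
  · have : (e+f-1)*(e+f-1) = e*e + e*f + (f*e + f*f) - 2*e - 2*f + 1 := by noncomm_ring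
    rw [this, he, hf, hefm, hfe]
    noncomm_ring
  · ext x
    simp only [Set.mem_setOf_eq]
    constructor
    · intro hx
      have h1 : e*x + f*x - x = x := by
        have : (e+f-1)*x = e*x + f*x - x := by noncomm_ring
        rw [← this, hx]
      have key : e*e*x + e*f*x - e*x = e*x := by
        have := congrArg (fun y => e*y) h1
        simpa only [mul_sub, mul_add, ← mul_assoc] using this
      rw [he, hefm] at key
      have h2 : f*x = e*x := by rw [← key]; noncomm_ring
      rw [h2] at h1
      have h5 : (2:R)*(e*x) = 2*x := by
        have := congrArg (fun y => y + x) h1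
        simp only [sub_add_cancel] at this
        rw [two_mul, two_mul]
        exact this
      have h6 : e*x = x := by
        have := congrArg (fun y => ⅟(2:R) * y) h5
        simpa [invOf_mul_cancel_left] using this
      exact ⟨x, h6.symm⟩
    · rintro ⟨r, rfl⟩
      show (e+f-1)*(e*r) = e*r
      have : (e+f-1)*(e*r) = (e*e)*r + (f*e)*r - e*r := by noncomm_ring
      rw [this, he, hfe]
      noncomm_ring
  · have s1 : (e+f-1)*(2*f-1) = 2*(e*f) + 2*(f*f) - 2*f - e - f + 1 := by noncomm_ring
    rw [hefm, hf] at s1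
    have s1' : (e+f-1)*(2*f-1) = f - e + 1 := by rw [s1]; noncomm_ring
    rw [s1']
    have s2 : (f-e+1)*(e+f-1) = f*e + f*f - f - (e*e) - e*f + e + e + f - 1 := by
      noncomm_ring
    rw [s2, hfe, hf, he, hefm]
    noncomm_ring
  · intro w' hw'2 hfix hconj
    -- w' * f = f since f ∈ eR = fixed set
    have hmemf : f ∈ {x : R | w' * x = x} := by rw [hfix]; exact hfR
    have hw'f : w' * f = f := hmemf
    -- w' * (2f-1) = (2e-1) * w'
    have hconj' : w' * (2*f-1) = (2*e-1)*w' := by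
      have := congrArg (fun y => y * w') hconj
      simp only [mul_assoc, hw'2, mul_one] at this
      exact this
    have h2 : (2:R)*(w'*f) = 2*(e*w') := by
      have ha : w'*(2*f-1) = 2*(w'*f) - w' := by noncomm_ring
      have hb : (2*e-1)*w' = 2*(e*w') - w' := by noncomm_ring
      have hc := hconj'
      rw [ha, hb] at hc
      have := congrArg (fun y => y + w') hc
      simpa using this
    have hew' : e * w' = f := by
      have := congrArg (fun y => ⅟(2:R) * y) h2
      simp only [invOf_mul_cancel_left] at this
      rw [← this, hw'f]
    have hmem1 : (w' + 1) ∈ {x : R | w' * x = x} := by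
      show w' * (w' + 1) = w' + 1
      rw [mul_add, hw'2, mul_one, add_comm]
    rw [hfix] at hmem1
    obtain ⟨r, hr⟩ := hmem1
    have h3 : e*(w'+1) = w'+1 := by rw [hr, ← mul_assoc, he]
    rw [mul_add, mul_one, hew'] at h3
    -- h3 : f + e = w' + 1
    rw [eq_sub_of_add_eq h3.symm]
    abel
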